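/- Let ρ_d be an n×n Hermitian matrix and define J(U) = Tr(U ρ_d U† ρ_d) on the unitary group. If U₀ is a critical point of J, then [U₀ ρ_d U₀†, ρ_d] = 0. -/

import Mathlib

open Matrix

attribute [local instance] Matrix.linftyOpNormedRing Matrix.linftyOpNormedAlgebra

theorem stmt_9 {n : ℕ} (ρd U₀ : Matrix (Fin n) (Fin n) ℂ)
    (hρd : ρd.IsHermitian) (hU₀ : U₀ ∈ Matrix.unitaryGroup (Fin n) ℂ)
    (hcrit : ∀ X : Matrix (Fin n) (Fin n) ℂ, Xᴴ = -X →
      deriv (fun t : ℝ =>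
        ((NormedSpace.exp ((t : ℂ) • X)) * U₀ * ρd * U₀ᴴ *
          (NormedSpace.exp ((t : ℂ) • X))ᴴ * ρd).trace) 0 = 0) :
    (U₀ * ρd * U₀ᴴ) * ρd - ρd * (U₀ * ρd * U₀ᴴ) = 0 := by
  set A := U₀ * ρd * U₀ᴴ with hA
  set C := A * ρd - ρd * A with hCdef
  have hAh : Aᴴ = A := by
    simp [hA, conjTranspose_mul, hρd.eq, Matrix.mul_assoc]
  have hCh : Cᴴ = -C := by
    simp [hCdef, conjTranspose_mul, hρd.eq, hAh]
  -- the trace linear map as a continuous linear map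
  let L : Matrix (Fin n) (Fin n) ℂ →L[ℝ] ℂ :=
    LinearMap.toContinuousLinearMap
      ((Matrix.traceLinearMap (Fin n) ℂ ℂ).restrictScalars ℝ)
  have key : ∀ X : Matrix (Fin n) (Fin n) ℂ, Xᴴ = -X → (X * C).trace = 0 := by
    intro X hX
    have hc := hcrit X hX
    -- rewrite the function using real exponentials
    have hfun : (fun t : ℝ =>
        ((NormedSpace.exp ((t : ℂ) • X)) * U₀ * ρd * U₀ᴴ *
          (NormedSpace.exp ((t : ℂ) • X))ᴴ * ρd).trace) =
        (fun t : ℝ =>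
          L ((NormedSpace.exp (t • X) * A) * NormedSpace.exp (t • (-X)) * ρd)) := by
      funext t
      have h1 : ((t : ℂ) • X) = t • X := by
        simp [Complex.coe_smul]
      have h2 : NormedSpace.exp ((t : ℂ) • X) = NormedSpace.exp (t • X) := by
        rw [h1]
      have h3 : (NormedSpace.exp (t • X))ᴴ = NormedSpace.exp (t • (-X)) := by
        rw [← Matrix.exp_conjTranspose]
        congr 1
        simp [hX]
      simp only [h2, h3, hA]
      simp [Matrix.traceLinearMap, L, Matrix.mul_assoc]
    rw [hfun] at hc
    -- compute the derivative
    have hE : HasDerivAt (fun t : ℝ => NormedSpace.exp (t • X))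
        (NormedSpace.exp ((0 : ℝ) • X) * X) 0 := hasDerivAt_exp_smul_const X 0
    have hE2 : HasDerivAt (fun t : ℝ => NormedSpace.exp (t • (-X)))
        (NormedSpace.exp ((0 : ℝ) • (-X)) * (-X)) 0 := hasDerivAt_exp_smul_const (-X) 0
    have hE' : HasDerivAt (fun t : ℝ => NormedSpace.exp (t • X)) X 0 := by
      simpa [NormedSpace.exp_zero] using hE
    have hE2' : HasDerivAt (fun t : ℝ => NormedSpace.exp (t • (-X))) (-X) 0 := by
      simpa [NormedSpace.exp_zero] using hE2
    have hprod : HasDerivAt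
        (fun t : ℝ => (NormedSpace.exp (t • X) * A) * NormedSpace.exp (t • (-X)) * ρd)
        ((X * A + A * (-X)) * ρd) 0 := by
      have h4 := ((hE'.mul_const A).mul hE2').mul_const ρd
      simp [NormedSpace.exp_zero] at h4 ⊢
      exact h4
    have hderiv : HasDerivAt
        (fun t : ℝ => L ((NormedSpace.exp (t • X) * A) * NormedSpace.exp (t • (-X)) * ρd))
        (L ((X * A + A * (-X)) * ρd)) 0 :=
      (L.hasFDerivAt.comp_hasDerivAt 0 hprod)
    have := hderiv.deriv
    rw [hc] at this
    have h5 : ((X * A + A * (-X)) * ρd).trace = 0 := this.symm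
    have h6 : (X * A * ρd).trace - (A * X * ρd).trace = 0 := by
      have := h5
      simp only [Matrix.add_mul, Matrix.trace_add, Matrix.mul_neg, Matrix.neg_mul,
        Matrix.trace_neg] at this
      linear_combination this
    calc (X * C).trace = (X * (A * ρd) - X * (ρd * A)).trace := by
            rw [hCdef, Matrix.mul_sub]
      _ = (X * A * ρd).trace - (A * X * ρd).trace := by
            rw [Matrix.trace_sub]
            congr 1
            · simp [Matrix.mul_assoc]
            · rw [← Matrix.mul_assoc, Matrix.trace_mul_comm]
              simp [Matrix.mul_assoc]
      _ = 0 := h6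
  have h0 : (C * C).trace = 0 := key C hCh
  have h1 : (Cᴴ * C).trace = 0 := by
    rw [hCh]
    simpa using congrArg Neg.neg h0
  -- conclude C = 0
  have h2 : ∑ j, ∑ i, Complex.normSq (C i j) = 0 := by
    have htr : (Cᴴ * C).trace = ((∑ j, ∑ i, Complex.normSq (C i j) : ℝ) : ℂ) := by
      simp only [Matrix.trace, Matrix.diag, Matrix.mul_apply, Matrix.conjTranspose_apply]
      push_cast
      refine Finset.sum_congr rfl fun j _ => Finset.sum_congr rfl fun i _ => ?_
      rw [RCLike.star_def, mul_comm, Complex.mul_conj]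
    rw [htr] at h1
    exact_mod_cast h1
  have h3 : C = 0 := by
    ext i j
    have hj := (Finset.sum_eq_zero_iff_of_nonneg (fun j _ => Finset.sum_nonneg
      (fun i _ => Complex.normSq_nonneg _))).mp h2 j (Finset.mem_univ j)
    have hi := (Finset.sum_eq_zero_iff_of_nonneg
      (fun i _ => Complex.normSq_nonneg _)).mp hj i (Finset.mem_univ i)
    simpa using Complex.normSq_eq_zero.mp hi
  exact h3
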